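/- Tightness of the edge costs at optimality in the nonconvex formulation: if a feasible point of the nonconvex formulation has l_{e,k} > ‖l^{xy}_{e,k}‖ for some edge e and agent k, then the point obtained from it by replacing l_{e,k} with ‖l^{xy}_{e,k}‖ (all other variables unchanged) is again feasible for the nonconvex formulation and has strictly smaller objective value. Consequently, every optimal solution of the nonconvex formulation satisfies l_{e,k} = ‖l^{xy}_{e,k}‖ = y_{e,k}·‖p_{j,k} − p_{i,k}‖ for every edge e = (i,j) ∈ E and every agent k. -/
import Mathlib


open scoped BigOperators Classical

noncomputable section

/-- The Euclidean plane ℝ². -/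
abbrev Plane := EuclideanSpace ℝ (Fin 2)

/-- Nodes of the graph: `Sum.inl i` is the segment node `i ∈ V_seg`,
`Sum.inr false` is the depot `s`, and `Sum.inr true` is the depot copy `s'`. -/
abbrev Node (ι : Type*) := ι ⊕ Bool

/-- The data of an MA-MT-TSP instance: a finite type `ι` of segment nodes, a finite
type `υ` of targets, a cluster assignment `cl` whose surjectivity expresses that every
cluster is nonempty, time windows `tlo i ≤ thi i`, start positions `pos`, velocities
`vel` (vanishing at the depot and its copy), a maximum speed `vmax > 0`, and a number
of agents `m ≥ 1`. -/
structure MTData (ι υ : Type*) where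
  cl : ι → υ
  cl_surj : Function.Surjective cl
  tlo : Node ι → ℝ
  thi : Node ι → ℝ
  tw : ∀ i, tlo i ≤ thi i
  pos : Node ι → Plane
  vel : Node ι → Plane
  vel_s : vel (Sum.inr false) = 0
  vel_s' : vel (Sum.inr true) = 0
  vmax : ℝ
  vmax_pos : 0 < vmax
  m : ℕ
  m_pos : 1 ≤ m

variable {ι υ : Type*} [Fintype ι] [Fintype υ]

/-- The edge relation: from the depot `s` to every segment node, between segment nodes
in different clusters, and from every segment node to the depot copy `s'`. -/
def isEdge (D : MTData ι υ) : Node ι → Node ι → Prop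
  | Sum.inr false, Sum.inl _ => True
  | Sum.inl i, Sum.inl j => D.cl i ≠ D.cl j
  | Sum.inl _, Sum.inr true => True
  | _, _ => False

/-- The edge set `E` as a finite set of ordered pairs of nodes. -/
def edges (D : MTData ι υ) : Finset (Node ι × Node ι) :=
  Finset.univ.filter fun e => isEdge D e.1 e.2

/-- `E_i^in`: the edges of `E` entering node `i`. -/
def inE (D : MTData ι υ) (i : Node ι) : Finset (Node ι × Node ι) :=
  (edges D).filter fun e => e.2 = i

/-- `E_i^out`: the edges of `E` exiting node `i`. -/
def outE (D : MTData ι υ) (i : Node ι) : Finset (Node ι × Node ι) :=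
  (edges D).filter fun e => e.1 = i

/-- A point of the nonconvex formulation: edge variables `y`, `l`, `lxy`, `zp`, `zt`,
`zp'`, `zt'` for each edge and agent, and node variables `t`, `p` for each node and
agent.  Agents are indexed by `Fin m`. -/
structure NCPoint (ι : Type*) (m : ℕ) where
  y : Node ι × Node ι → Fin m → ℝ
  l : Node ι × Node ι → Fin m → ℝ
  lxy : Node ι × Node ι → Fin m → Plane
  zp : Node ι × Node ι → Fin m → Plane
  zt : Node ι × Node ι → Fin m → ℝ
  zp' : Node ι × Node ι → Fin m → Plane
  zt' : Node ι × Node ι → Fin m → ℝ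
  t : Node ι → Fin m → ℝ
  p : Node ι → Fin m → Plane

variable {ι υ : Type*} [Fintype ι] [Fintype υ]

/-- Feasibility for the nonconvex formulation. -/
def NCFeas (D : MTData ι υ) (P : NCPoint ι D.m) : Prop :=
  (∀ e ∈ edges D, ∀ k, P.y e k = 0 ∨ P.y e k = 1) ∧
  (∀ e ∈ edges D, ∀ k, 0 ≤ P.l e k) ∧
  (∀ k, ∑ e ∈ outE D (Sum.inr false), P.y e k ≤ 1) ∧
  (∀ k, ∑ e ∈ inE D (Sum.inr true), P.y e k ≤ 1) ∧
  (∀ u : υ, ∑ k, ∑ i ∈ Finset.univ.filter (fun i => D.cl i = u),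
      ∑ e ∈ inE D (Sum.inl i), P.y e k = 1) ∧
  (∀ i : ι, ∀ k, ∑ e ∈ inE D (Sum.inl i), P.y e k = ∑ e ∈ outE D (Sum.inl i), P.y e k) ∧
  (∀ i : Node ι, ∀ k, D.tlo i ≤ P.t i k ∧ P.t i k ≤ D.thi i) ∧
  (∀ i : Node ι, ∀ k, P.p i k = D.pos i + (P.t i k - D.tlo i) • D.vel i) ∧
  (∀ e ∈ edges D, ∀ k,
    P.zp e k = P.y e k • P.p e.1 k ∧
    P.zt e k = P.y e k * P.t e.1 k ∧
    P.zp' e k = P.y e k • P.p e.2 k ∧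
    P.zt' e k = P.y e k * P.t e.2 k ∧
    P.l e k ≤ D.vmax * (P.zt' e k - P.zt e k) ∧
    P.lxy e k = P.zp' e k - P.zp e k ∧
    ‖P.lxy e k‖ ^ 2 ≤ P.l e k ^ 2)

/-- Objective of the nonconvex formulation. -/
def NCObj (D : MTData ι υ) (P : NCPoint ι D.m) : ℝ :=
  ∑ k, ∑ e ∈ edges D, P.l e k

/-- A point of the MICP formulation: a single set of edge variables, together with the
integer depot flow `α` (stated as a real number required to be integral). -/
structure MICPPoint (ι : Type*) where
  y : Node ι × Node ι → ℝ
  l : Node ι × Node ι → ℝ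
  lxy : Node ι × Node ι → Plane
  zp : Node ι × Node ι → Plane
  zt : Node ι × Node ι → ℝ
  zp' : Node ι × Node ι → Plane
  zt' : Node ι × Node ι → ℝ
  α : ℝ

/-- Feasibility for the MICP formulation. -/
def MICPFeas (D : MTData ι υ) (Q : MICPPoint ι) : Prop :=
  (∀ e ∈ edges D, Q.y e = 0 ∨ Q.y e = 1) ∧
  (∀ e ∈ edges D, 0 ≤ Q.l e) ∧
  (∃ n : ℤ, Q.α = n) ∧ (1 ≤ Q.α) ∧ (Q.α ≤ (D.m : ℝ)) ∧
  (∑ e ∈ outE D (Sum.inr false), Q.y e = Q.α) ∧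
  (∑ e ∈ inE D (Sum.inr true), Q.y e = Q.α) ∧
  (∀ u : υ, ∑ i ∈ Finset.univ.filter (fun i => D.cl i = u),
      ∑ e ∈ inE D (Sum.inl i), Q.y e = 1) ∧
  (∀ i : ι, ∑ e ∈ inE D (Sum.inl i), Q.y e = ∑ e ∈ outE D (Sum.inl i), Q.y e) ∧
  (∀ i : ι, ∑ e ∈ inE D (Sum.inl i), Q.zt' e = ∑ e ∈ outE D (Sum.inl i), Q.zt e) ∧
  (∀ e ∈ edges D,
    Q.y e * D.tlo e.1 ≤ Q.zt e ∧ Q.zt e ≤ Q.y e * D.thi e.1 ∧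
    Q.y e * D.tlo e.2 ≤ Q.zt' e ∧ Q.zt' e ≤ Q.y e * D.thi e.2 ∧
    Q.zp e = Q.zt e • D.vel e.1 + Q.y e • (D.pos e.1 - D.tlo e.1 • D.vel e.1) ∧
    Q.zp' e = Q.zt' e • D.vel e.2 + Q.y e • (D.pos e.2 - D.tlo e.2 • D.vel e.2) ∧
    Q.l e ≤ D.vmax * (Q.zt' e - Q.zt e) ∧
    Q.lxy e = Q.zp' e - Q.zp e ∧
    ‖Q.lxy e‖ ^ 2 ≤ Q.l e ^ 2)

/-- Objective of the MICP formulation. -/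
def MICPObj (D : MTData ι υ) (Q : MICPPoint ι) : ℝ :=
  ∑ e ∈ edges D, Q.l e

/-- **tightness of the edge costs at optimality, nonconvex
formulation.**  If a feasible point of the nonconvex formulation has
`l_{e,k} > ‖lxy_{e,k}‖` for some edge `e` and agent `k`, then replacing `l_{e,k}` by
`‖lxy_{e,k}‖` (all other variables unchanged) yields a feasible point with strictly
smaller objective value.  Consequently every optimal solution satisfies
`l_{e,k} = ‖lxy_{e,k}‖ = y_{e,k}·‖p_{j,k} − p_{i,k}‖` for every edge `e = (i,j)` and
every agent `k`. -/
theorem nonconvex_edge_costs_tight_at_optimality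
    {ι υ : Type*} [Fintype ι] [Fintype υ] (D : MTData ι υ) :
    (∀ (P : NCPoint ι D.m) (e : Node ι × Node ι) (k : Fin D.m),
      NCFeas D P → e ∈ edges D → ‖P.lxy e k‖ < P.l e k →
      NCFeas D { P with l := fun e' k' =>
          if e' = e ∧ k' = k then ‖P.lxy e k‖ else P.l e' k' } ∧
      NCObj D { P with l := fun e' k' =>
          if e' = e ∧ k' = k then ‖P.lxy e k‖ else P.l e' k' } < NCObj D P) ∧
    (∀ P : NCPoint ι D.m, NCFeas D P →
      (∀ P' : NCPoint ι D.m, NCFeas D P' → NCObj D P ≤ NCObj D P') →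
      ∀ e ∈ edges D, ∀ k,
        P.l e k = ‖P.lxy e k‖ ∧ ‖P.lxy e k‖ = P.y e k * ‖P.p e.2 k - P.p e.1 k‖) := by
  have part1 : ∀ (P : NCPoint ι D.m) (e : Node ι × Node ι) (k : Fin D.m),
      NCFeas D P → e ∈ edges D → ‖P.lxy e k‖ < P.l e k →
      NCFeas D { P with l := fun e' k' =>
          if e' = e ∧ k' = k then ‖P.lxy e k‖ else P.l e' k' } ∧
      NCObj D { P with l := fun e' k' =>
          if e' = e ∧ k' = k then ‖P.lxy e k‖ else P.l e' k' } < NCObj D P := by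
    intro P e k hfeas he hlt
    obtain ⟨h1, h2, h3, h4, h5, h6, h7, h8, h9⟩ := hfeas
    constructor
    · refine ⟨h1, ?_, h3, h4, h5, h6, h7, h8, ?_⟩
      · intro e' he' k'
        by_cases h : e' = e ∧ k' = k
        · simp only [h, if_true, and_self, if_pos]
          exact norm_nonneg _
        · simpa only [if_neg h] using h2 e' he' k'
      · intro e' he' k'
        obtain ⟨c1, c2, c3, c4, c5, c6, c7⟩ := h9 e' he' k'
        by_cases h : e' = e ∧ k' = k
        · obtain ⟨rfl, rfl⟩ := h
          refine ⟨c1, c2, c3, c4, ?_, c6, ?_⟩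
          · simp only [and_self, if_pos]
            linarith
          · simp only [and_self, if_pos]
            exact le_refl _
        · exact ⟨c1, c2, c3, c4, by simpa only [if_neg h] using c5, c6,
            by simpa only [if_neg h] using c7⟩
    · unfold NCObj
      have hsub : ∀ k', ∀ e' ∈ edges D,
          (if e' = e ∧ k' = k then ‖P.lxy e k‖ else P.l e' k') ≤ P.l e' k' := by
        intro k' e' _
        by_cases h : e' = e ∧ k' = k
        · obtain ⟨rfl, rfl⟩ := h
          simp only [and_self, if_pos]
          linarith
        · simp [h]
      refine Finset.sum_lt_sum (fun k' _ => Finset.sum_le_sum (hsub k')) ?_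
      refine ⟨k, Finset.mem_univ k, ?_⟩
      refine Finset.sum_lt_sum (hsub k) ⟨e, he, ?_⟩
      simp only [and_self, if_pos]
      exact hlt
  refine ⟨part1, ?_⟩
  intro P hfeas hopt e he k
  obtain ⟨h1, h2, -, -, -, -, -, -, h9⟩ := hfeas.imp id id
  obtain ⟨c1, -, c3, -, -, c6, c7⟩ := h9 e he k
  have hl0 : 0 ≤ P.l e k := h2 e he k
  have hly : ‖P.lxy e k‖ ≤ P.l e k := by
    nlinarith [norm_nonneg (P.lxy e k)]
  have heq : P.l e k = ‖P.lxy e k‖ := by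
    by_contra hne
    have hlt : ‖P.lxy e k‖ < P.l e k := hly.lt_of_ne fun h => hne h.symm
    obtain ⟨hf', hobj⟩ := part1 P e k hfeas he hlt
    exact absurd (hopt _ hf') (not_le.mpr hobj)
  refine ⟨heq, ?_⟩
  have hx : P.lxy e k = P.y e k • (P.p e.2 k - P.p e.1 k) := by
    rw [c6, c3, c1, smul_sub]
  rw [hx, norm_smul, Real.norm_eq_abs]
  rcases h1 e he k with h | h <;> simp [h]

end
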